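/- Let $p\in(0,1/2]$ and let $f:\{0,1\}^n\to\{0,1\}$ be a monotone Boolean function that is $(r,\delta)$-global with respect to $\mu_p$. Then for every nonempty $S\subset[n]$ with $|S|\le r$, the generalised influence satisfies $\mathrm{I}_S(f)\le 8^r\delta$. -/

import Mathlib

open Finset

/-- Weight of a point of the `p`-biased cube. -/
noncomputable def cubeWt {n : ℕ} (p : ℝ) (x : Fin n → Bool) : ℝ :=
  ∏ i, if x i then p else 1 - p

/-- Expectation with respect to the `p`-biased measure on `{0,1}ⁿ`. -/
noncomputable def cubeE {n : ℕ} (p : ℝ) (f : (Fin n → Bool) → ℝ) : ℝ :=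
  ∑ x : Fin n → Bool, cubeWt p x * f x

/-- `restrict S B f` is the restriction `f_{S→x}` of `f` where the coordinates of
`S` are fixed according to the indicator of `B` (i.e. coordinates in `S ∩ B` are set
to `1` and coordinates in `S \ B` are set to `0`). -/
def cubeRestrict {n : ℕ} (S B : Finset (Fin n)) (f : (Fin n → Bool) → ℝ) :
    (Fin n → Bool) → ℝ :=
  fun y => f (fun i => if i ∈ S then decide (i ∈ B) else y i)

/-- Generalised influence
`I_S(f) = E_{μ_p}[(∑_{x ∈ {0,1}^S} (-1)^{|S|-|x|} f_{S→x})²]`. -/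
noncomputable def genInf {n : ℕ} (p : ℝ) (S : Finset (Fin n))
    (f : (Fin n → Bool) → ℝ) : ℝ :=
  cubeE p (fun y =>
    (∑ B ∈ S.powerset, (-1 : ℝ) ^ (S.card - B.card) * cubeRestrict S B f y) ^ 2)

/-- `f` is `(r,δ)`-global: restricting any set of at most `r` coordinates to `1`
increases the measure by at most `δ`. -/
def isGlobal {n : ℕ} (p : ℝ) (r : ℕ) (δ : ℝ) (f : (Fin n → Bool) → ℝ) : Prop :=
  ∀ J : Finset (Fin n), J.card ≤ r → cubeE p (cubeRestrict J J f) ≤ cubeE p f + δ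

section helpers
variable {n : ℕ} {p : ℝ}

lemma cubeWt_nonneg (hp0 : 0 ≤ p) (hp1 : p ≤ 1) (x : Fin n → Bool) : 0 ≤ cubeWt p x := by
  refine Finset.prod_nonneg fun i _ => ?_
  split <;> linarith

lemma cubeE_mono (hp0 : 0 ≤ p) (hp1 : p ≤ 1) {g h : (Fin n → Bool) → ℝ}
    (H : ∀ x, g x ≤ h x) : cubeE p g ≤ cubeE p h := by
  refine Finset.sum_le_sum fun x _ => ?_
  exact mul_le_mul_of_nonneg_left (H x) (cubeWt_nonneg hp0 hp1 x)

lemma cubeE_sum {ι : Type*} (s : Finset ι) (g : ι → (Fin n → Bool) → ℝ) :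
    cubeE p (fun y => ∑ b ∈ s, g b y) = ∑ b ∈ s, cubeE p (g b) := by
  simp only [cubeE, Finset.mul_sum]
  exact Finset.sum_comm

lemma cubeE_sub (g h : (Fin n → Bool) → ℝ) :
    cubeE p (fun y => g y - h y) = cubeE p g - cubeE p h := by
  simp only [cubeE, mul_sub, Finset.sum_sub_distrib]

lemma cubeE_const_mul (c : ℝ) (g : (Fin n → Bool) → ℝ) :
    cubeE p (fun y => c * g y) = c * cubeE p g := by
  simp only [cubeE, Finset.mul_sum]
  exact Finset.sum_congr rfl fun x _ => by ring

lemma half_sum (i : Fin n) (F : (Fin n → Bool) → ℝ)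
    (hF : ∀ y b, F (Function.update y i b) = F y) (b : Bool) :
    ∑ y ∈ univ.filter (fun y => y i = b), F y
      = ∑ y ∈ univ.filter (fun y => y i = true), F y := by
  refine Finset.sum_nbij' (fun y => Function.update y i true)
    (fun y => Function.update y i b) ?_ ?_ ?_ ?_ ?_
  · intro a ha; simp [Function.update_self]
  · intro a ha; simp [Function.update_self]
  · intro a ha
    simp only [mem_filter, mem_univ, true_and] at ha
    show Function.update (Function.update a i true) i b = a
    rw [Function.update_idem, ← ha, Function.update_eq_self]
  · intro a ha
    simp only [mem_filter, mem_univ, true_and] at ha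
    show Function.update (Function.update a i b) i true = a
    rw [Function.update_idem, ← ha, Function.update_eq_self]
  · intro a ha; rw [hF]

lemma cubeE_update (i : Fin n) (g : (Fin n → Bool) → ℝ) :
    cubeE p g = p * cubeE p (fun y => g (Function.update y i true))
      + (1 - p) * cubeE p (fun y => g (Function.update y i false)) := by
  set W : (Fin n → Bool) → ℝ := fun y => ∏ j ∈ univ.erase i, (if y j then p else 1 - p) with hW
  have hWupd : ∀ (y : Fin n → Bool) (b : Bool), W (Function.update y i b) = W y := by
    intro y b
    refine Finset.prod_congr rfl fun j hj => ?_
    rw [Function.update_of_ne (mem_erase.1 hj).1]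
  have hwt : ∀ y : Fin n → Bool, cubeWt p y = (if y i then p else 1 - p) * W y := by
    intro y
    rw [cubeWt, ← Finset.mul_prod_erase _ _ (mem_univ i)]
  set F : Bool → (Fin n → Bool) → ℝ := fun b y => W y * g (Function.update y i b) with hF
  have hFupd : ∀ (b : Bool) (y : Fin n → Bool) (c : Bool),
      F b (Function.update y i c) = F b y := by
    intro b y c
    simp only [hF, hWupd, Function.update_idem]
  set T : Bool → ℝ := fun b => ∑ y ∈ univ.filter (fun y => y i = true), F b y with hT
  have key : ∀ b : Bool, cubeE p (fun y => g (Function.update y i b)) = T b := by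
    intro b
    have : cubeE p (fun y => g (Function.update y i b))
        = ∑ y : Fin n → Bool, (if y i then p else 1 - p) * F b y := by
      refine Finset.sum_congr rfl fun y _ => ?_
      rw [hwt]; ring
    rw [this, ← Finset.sum_filter_add_sum_filter_not univ (fun y => y i = true)]
    have h1 : ∑ y ∈ univ.filter (fun y => y i = true), (if y i then p else 1 - p) * F b y
        = p * T b := by
      rw [Finset.mul_sum]
      refine Finset.sum_congr rfl fun y hy => ?_
      simp only [mem_filter, mem_univ, true_and] at hy
      rw [hy]; simp
    have h2 : ∑ y ∈ univ.filter (fun y => ¬ y i = true), (if y i then p else 1 - p) * F b y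
        = (1 - p) * T b := by
      have : univ.filter (fun y : Fin n → Bool => ¬ y i = true)
          = univ.filter (fun y => y i = false) := by
        refine Finset.filter_congr fun y _ => ?_
        simp [Bool.not_eq_true]
      rw [this]
      have step : ∑ y ∈ univ.filter (fun y => y i = false), (if y i then p else 1 - p) * F b y
          = (1 - p) * ∑ y ∈ univ.filter (fun y => y i = false), F b y := by
        rw [Finset.mul_sum]
        refine Finset.sum_congr rfl fun y hy => ?_
        simp only [mem_filter, mem_univ, true_and] at hy
        rw [hy]; simp
      rw [step, half_sum i (F b) (hFupd b) false]
    rw [h1, h2]; ring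
  rw [key true, key false]
  have : cubeE p g = ∑ y : Fin n → Bool,
      (if y i then p * F true y else (1 - p) * F false y) := by
    refine Finset.sum_congr rfl fun y _ => ?_
    rw [hwt]
    by_cases hy : y i = true
    · simp only [hy, if_true, hF]
      rw [show Function.update y i true = y by rw [← hy, Function.update_eq_self]]
      ring
    · simp only [Bool.not_eq_true] at hy
      simp only [hy, hF]
      rw [show Function.update y i false = y by rw [← hy, Function.update_eq_self]]
      simp only [Bool.false_eq_true, if_false]
      ring
  rw [this, ← Finset.sum_filter_add_sum_filter_not univ (fun y => y i = true)]
  have h1 : ∑ y ∈ univ.filter (fun y => y i = true),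
      (if y i then p * F true y else (1 - p) * F false y) = p * T true := by
    rw [Finset.mul_sum]
    refine Finset.sum_congr rfl fun y hy => ?_
    simp only [mem_filter, mem_univ, true_and] at hy
    rw [hy]; simp
  have h2 : ∑ y ∈ univ.filter (fun y => ¬ y i = true),
      (if y i then p * F true y else (1 - p) * F false y) = (1 - p) * T false := by
    have he : univ.filter (fun y : Fin n → Bool => ¬ y i = true)
        = univ.filter (fun y => y i = false) := by
      refine Finset.filter_congr fun y _ => ?_
      simp [Bool.not_eq_true]
    rw [he]
    have step : ∑ y ∈ univ.filter (fun y => y i = false),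
        (if y i then p * F true y else (1 - p) * F false y)
        = (1 - p) * ∑ y ∈ univ.filter (fun y => y i = false), F false y := by
      rw [Finset.mul_sum]
      refine Finset.sum_congr rfl fun y hy => ?_
      simp only [mem_filter, mem_univ, true_and] at hy
      rw [hy]; simp
    rw [step, half_sum i (F false) (hFupd false) false]
  rw [h1, h2]

end helpers

section restr
variable {n : ℕ}

lemma cubeRestrict_congr (f : (Fin n → Bool) → ℝ) {S B B' : Finset (Fin n)}
    (h : ∀ i ∈ S, (i ∈ B ↔ i ∈ B')) : cubeRestrict S B f = cubeRestrict S B' f := by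
  funext y
  unfold cubeRestrict
  congr 1
  funext i
  by_cases hi : i ∈ S
  · simp only [hi, if_true]
    simp only [h i hi]
  · simp [hi]

lemma cubeRestrict_insert (f : (Fin n → Bool) → ℝ) (S B : Finset (Fin n)) {j : Fin n}
    (hj : j ∉ S) (y : Fin n → Bool) :
    cubeRestrict (insert j S) B f y
      = cubeRestrict S B f (Function.update y j (decide (j ∈ B))) := by
  unfold cubeRestrict
  congr 1
  funext i
  by_cases hij : i = j
  · subst hij
    simp [hj]
  · simp [Finset.mem_insert, hij, Function.update_of_ne hij]

variable {f : (Fin n → Bool) → ℝ}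
  (hmono : ∀ x y : Fin n → Bool, (∀ i, x i = true → y i = true) → f x ≤ f y)

include hmono

lemma restrict_mono_sets {S B B' : Finset (Fin n)} (h : ∀ l ∈ S, l ∈ B → l ∈ B')
    (y : Fin n → Bool) : cubeRestrict S B f y ≤ cubeRestrict S B' f y := by
  refine hmono _ _ fun l hl => ?_
  by_cases hlS : l ∈ S
  · simp only [hlS, if_true] at hl ⊢
    simp only [decide_eq_true_eq] at hl ⊢
    exact h l hlS hl
  · simp only [hlS, if_false] at hl ⊢
    exact hl

lemma le_restrict (A : Finset (Fin n)) (y : Fin n → Bool) :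
    f y ≤ cubeRestrict A A f y := by
  refine hmono _ _ fun l hl => ?_
  by_cases hlA : l ∈ A <;> simp [hlA, hl]

lemma restrict_le_sub {B S : Finset (Fin n)} (_hBS : B ⊆ S) (y : Fin n → Bool) :
    cubeRestrict S B f y ≤ cubeRestrict B B f y := by
  refine hmono _ _ fun l hl => ?_
  by_cases hlB : l ∈ B
  · simp [hlB]
  · by_cases hlS : l ∈ S
    · simp only [hlS, if_true] at hl
      simp only [decide_eq_true_eq] at hl
      exact absurd hl hlB
    · simp only [hlS, if_false] at hl
      simp [hlB, hl]

end restr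

theorem stmt5 {n : ℕ} (p : ℝ) (hp0 : 0 < p) (hp : p ≤ 1 / 2)
    (f : (Fin n → Bool) → ℝ) (hBool : ∀ x, f x = 0 ∨ f x = 1)
    (hmono : ∀ x y : Fin n → Bool, (∀ i, x i = true → y i = true) → f x ≤ f y)
    (r : ℕ) (δ : ℝ) (hglob : isGlobal p r δ f) :
    ∀ S : Finset (Fin n), S.Nonempty → S.card ≤ r → genInf p S f ≤ 8 ^ r * δ := by
  intro S hS hSr
  have hp1 : p ≤ 1 := by linarith
  have hp0' : (0:ℝ) ≤ p := le_of_lt hp0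
  have h1p : (0:ℝ) < 1 - p := by linarith
  have hδ : 0 ≤ δ := by
    have h := hglob ∅ (by simp)
    have he : cubeRestrict (∅ : Finset (Fin n)) ∅ f = f := by
      funext y; simp [cubeRestrict]
    rw [he] at h; linarith
  have hf0 : ∀ x, 0 ≤ f x := fun x => by rcases hBool x with h|h <;> simp [h]
  have hf1 : ∀ x, f x ≤ 1 := fun x => by rcases hBool x with h|h <;> simp [h]
  -- Step A: upper bound for any restriction
  have stepA : ∀ B T : Finset (Fin n), B ⊆ T → B.card ≤ r →
      cubeE p (cubeRestrict T B f) ≤ cubeE p f + δ := by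
    intro B T hBT hBr
    calc cubeE p (cubeRestrict T B f) ≤ cubeE p (cubeRestrict B B f) :=
          cubeE_mono hp0' hp1 (fun y => restrict_le_sub hmono hBT y)
      _ ≤ cubeE p f + δ := hglob B hBr
  -- Step B: lower bound
  have stepB : ∀ Z A : Finset (Fin n), Disjoint A Z → (A ∪ Z).card ≤ r →
      cubeE p f - ((2:ℝ) ^ Z.card - 1) * δ ≤ cubeE p (cubeRestrict (A ∪ Z) A f) := by
    intro Z
    induction Z using Finset.induction_on with
    | empty =>
      intro A _ _
      simp only [union_empty, card_empty, pow_zero, sub_self, zero_mul, sub_zero]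
      exact cubeE_mono hp0' hp1 (fun y => le_restrict hmono A y)
    | @insert j Z hj IH =>
      intro A hd hc
      have hjA : j ∉ A := fun hA => Finset.disjoint_left.mp hd hA (mem_insert_self j Z)
      have hdAZ : Disjoint A Z := hd.mono_right (subset_insert j Z)
      have hjAZ : j ∉ A ∪ Z := by simp [hjA, hj]
      have hU : A ∪ insert j Z = insert j (A ∪ Z) := by rw [Finset.union_insert]
      have hsub : A ∪ Z ⊆ A ∪ insert j Z := by rw [hU]; exact subset_insert _ _
      have hcard : (A ∪ Z).card ≤ r := le_trans (card_le_card hsub) hc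
      set g := cubeRestrict (A ∪ Z) A f with hg
      have hg0 : (fun y => g (Function.update y j false))
          = cubeRestrict (insert j (A ∪ Z)) A f := by
        funext y
        rw [cubeRestrict_insert f (A ∪ Z) A hjAZ y, decide_eq_false hjA]
      have hg1 : (fun y => g (Function.update y j true))
          = cubeRestrict (insert j (A ∪ Z)) (insert j A) f := by
        funext y
        rw [cubeRestrict_insert f (A ∪ Z) (insert j A) hjAZ y,
          decide_eq_true (mem_insert_self j A)]
        rw [cubeRestrict_congr f (B := insert j A) (B' := A)
          (fun l hl => by
            have hlj : l ≠ j := fun h => hjAZ (h ▸ hl)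
            simp [Finset.mem_insert, hlj])]
      have hsplit := cubeE_update (p := p) j g
      rw [hg0, hg1] at hsplit
      have hIH := IH A hdAZ hcard
      have hiAr : (insert j A).card ≤ r := by
        refine le_trans (card_le_card ?_) hc
        rw [hU]
        exact insert_subset_insert j subset_union_left
      have hup : cubeE p (cubeRestrict (insert j (A ∪ Z)) (insert j A) f)
          ≤ cubeE p f + δ := by
        refine stepA _ _ ?_ hiAr
        exact insert_subset_insert j subset_union_left
      have hupp : p * cubeE p (cubeRestrict (insert j (A ∪ Z)) (insert j A) f)
          ≤ p * (cubeE p f + δ) := mul_le_mul_of_nonneg_left hup hp0'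
      have hz1 : (1:ℝ) ≤ 2 ^ Z.card := one_le_pow₀ (by norm_num)
      have hkey : 0 ≤ δ * (2:ℝ) ^ Z.card * (1 - 2 * p) :=
        mul_nonneg (mul_nonneg hδ (by positivity)) (by linarith)
      have hmul : (1 - p) * (cubeE p f - (2 * (2:ℝ) ^ Z.card - 1) * δ)
          ≤ (1 - p) * cubeE p (cubeRestrict (insert j (A ∪ Z)) A f) := by
        nlinarith [hIH, hupp, hkey, hsplit]
      have hfin := (mul_le_mul_iff_right₀ h1p).mp hmul
      rw [hU, card_insert_of_notMem hj, pow_succ]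
      linarith
  -- Step C
  obtain ⟨i, hiS⟩ := hS
  set S' := S.erase i with hS'
  have hiS' : i ∉ S' := notMem_erase i S
  have hins : insert i S' = S := insert_erase hiS
  have hScard : S.card = S'.card + 1 := by rw [← hins, card_insert_of_notMem hiS']
  set E : (Fin n → Bool) → ℝ := fun y => ∑ B ∈ S'.powerset,
    (cubeRestrict S (insert i B) f y - cubeRestrict S B f y) with hE
  have hterm01 : ∀ (B : Finset (Fin n)) (y : Fin n → Bool),
      0 ≤ cubeRestrict S B f y ∧ cubeRestrict S B f y ≤ 1 :=
    fun B y => ⟨hf0 _, hf1 _⟩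
  have htermle : ∀ B ∈ S'.powerset, ∀ y : Fin n → Bool,
      cubeRestrict S B f y ≤ cubeRestrict S (insert i B) f y := by
    intro B hB y
    exact restrict_mono_sets hmono (fun l _ hl => mem_insert_of_mem hl) y
  have hEnn : ∀ y, 0 ≤ E y := by
    intro y
    refine Finset.sum_nonneg fun B hB => sub_nonneg.2 (htermle B hB y)
  have hEle : ∀ y, E y ≤ (2:ℝ) ^ S'.card := by
    intro y
    calc E y ≤ ∑ B ∈ S'.powerset, (1:ℝ) := by
          refine Finset.sum_le_sum fun B hB => ?_
          have := (hterm01 (insert i B) y).2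
          have := (hterm01 B y).1
          linarith
      _ = (2:ℝ) ^ S'.card := by
          rw [Finset.sum_const, card_powerset]
          simp
  have habs : ∀ y : Fin n → Bool,
      |∑ B ∈ S.powerset, (-1 : ℝ) ^ (S.card - B.card) * cubeRestrict S B f y| ≤ E y := by
    intro y
    have hsum : ∑ B ∈ S.powerset, (-1 : ℝ) ^ (S.card - B.card) * cubeRestrict S B f y
        = ∑ B ∈ S'.powerset, ((-1 : ℝ) ^ (S.card - B.card) * cubeRestrict S B f y
            + (-1 : ℝ) ^ (S.card - (insert i B).card) * cubeRestrict S (insert i B) f y) := by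
      conv_lhs => rw [← hins]
      rw [Finset.sum_powerset_insert hiS']
      simp only [hins]
      rw [← Finset.sum_add_distrib]
    rw [hsum]
    refine le_trans (Finset.abs_sum_le_sum_abs _ _) (Finset.sum_le_sum fun B hB => ?_)
    have hBS' : B ⊆ S' := mem_powerset.1 hB
    have hiB : i ∉ B := fun h => hiS' (hBS' h)
    have hcB : (insert i B).card = B.card + 1 := card_insert_of_notMem hiB
    have hBcard : B.card + 1 ≤ S.card := by
      have := card_le_card hBS'
      omega
    have hke : S.card - B.card = (S.card - (insert i B).card) + 1 := by omega
    rw [hke, pow_succ]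
    have hrw : (-1 : ℝ) ^ (S.card - (insert i B).card) * (-1)
          * cubeRestrict S B f y
        + (-1 : ℝ) ^ (S.card - (insert i B).card) * cubeRestrict S (insert i B) f y
        = (-1 : ℝ) ^ (S.card - (insert i B).card)
          * (cubeRestrict S (insert i B) f y - cubeRestrict S B f y) := by ring
    rw [hrw, abs_mul, abs_pow, abs_neg, abs_one, one_pow, one_mul,
      abs_of_nonneg (sub_nonneg.2 (htermle B hB y))]
  have hptwise : ∀ y : Fin n → Bool,
      (∑ B ∈ S.powerset, (-1 : ℝ) ^ (S.card - B.card) * cubeRestrict S B f y) ^ 2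
        ≤ (2:ℝ) ^ S'.card * E y := by
    intro y
    calc (∑ B ∈ S.powerset, (-1 : ℝ) ^ (S.card - B.card) * cubeRestrict S B f y) ^ 2
        = |∑ B ∈ S.powerset, (-1 : ℝ) ^ (S.card - B.card) * cubeRestrict S B f y| ^ 2 :=
          (sq_abs _).symm
      _ ≤ E y ^ 2 := pow_le_pow_left₀ (abs_nonneg _) (habs y) 2
      _ = E y * E y := sq (E y) ▸ by ring
      _ ≤ (2:ℝ) ^ S'.card * E y := mul_le_mul_of_nonneg_right (hEle y) (hEnn y)
  have hgen : genInf p S f ≤ (2:ℝ) ^ S'.card * cubeE p E := by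
    rw [genInf, ← cubeE_const_mul]
    exact cubeE_mono hp0' hp1 hptwise
  -- compute cubeE p E
  have hEcompute : cubeE p E = ∑ B ∈ S'.powerset,
      (cubeE p (cubeRestrict S (insert i B) f) - cubeE p (cubeRestrict S B f)) := by
    rw [hE, cubeE_sum]
    exact Finset.sum_congr rfl fun B _ => cubeE_sub _ _
  have hsummand : ∀ B ∈ S'.powerset,
      cubeE p (cubeRestrict S (insert i B) f) - cubeE p (cubeRestrict S B f)
        ≤ (2:ℝ) ^ S.card * δ := by
    intro B hB
    have hBS' : B ⊆ S' := mem_powerset.1 hB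
    have hBS : B ⊆ S := hBS'.trans (erase_subset i S)
    have hiBS : insert i B ⊆ S := insert_subset hiS hBS
    have h1 : cubeE p (cubeRestrict S (insert i B) f) ≤ cubeE p f + δ :=
      stepA _ _ hiBS (le_trans (card_le_card hiBS) hSr)
    have hUB : B ∪ S \ B = S := union_sdiff_of_subset hBS
    have h2 : cubeE p f - ((2:ℝ) ^ (S \ B).card - 1) * δ
        ≤ cubeE p (cubeRestrict S B f) := by
      have := stepB (S \ B) B (disjoint_sdiff) (by rw [hUB]; exact hSr)
      rwa [hUB] at this
    have hpow : (2:ℝ) ^ (S \ B).card ≤ 2 ^ S.card :=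
      pow_le_pow_right₀ (by norm_num) (card_le_card sdiff_subset)
    nlinarith [mul_le_mul_of_nonneg_right hpow hδ]
  have hEbound : cubeE p E ≤ (2:ℝ) ^ S'.card * ((2:ℝ) ^ S.card * δ) := by
    rw [hEcompute]
    calc ∑ B ∈ S'.powerset, (cubeE p (cubeRestrict S (insert i B) f)
          - cubeE p (cubeRestrict S B f))
        ≤ ∑ B ∈ S'.powerset, (2:ℝ) ^ S.card * δ := Finset.sum_le_sum hsummand
      _ = (2:ℝ) ^ S'.card * ((2:ℝ) ^ S.card * δ) := by
          rw [Finset.sum_const, card_powerset, nsmul_eq_mul]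
          push_cast
          ring
  have hfinal : genInf p S f ≤ (2:ℝ) ^ (S'.card + S'.card + S.card) * δ := by
    have := le_trans hgen (mul_le_mul_of_nonneg_left hEbound (by positivity))
    calc genInf p S f ≤ (2:ℝ) ^ S'.card * ((2:ℝ) ^ S'.card * ((2:ℝ) ^ S.card * δ)) := this
      _ = (2:ℝ) ^ (S'.card + S'.card + S.card) * δ := by rw [pow_add, pow_add]; ring
  have hexp : S'.card + S'.card + S.card ≤ 3 * r := by omega
  have h8 : (8:ℝ) ^ r = 2 ^ (3 * r) := by
    rw [pow_mul]; norm_num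
  calc genInf p S f ≤ (2:ℝ) ^ (S'.card + S'.card + S.card) * δ := hfinal
    _ ≤ (2:ℝ) ^ (3 * r) * δ :=
        mul_le_mul_of_nonneg_right (pow_le_pow_right₀ (by norm_num) hexp) hδ
    _ = 8 ^ r * δ := by rw [h8]
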